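/- Let Γ be a finitely generated countable group acting nonsingularly and ergodically on a nonatomic standard probability space (X, 𝔅, μ), and let G be a locally compact second countable group. If there exists a bounded ergodic G-valued cocycle of the Γ-action, then G is compactly generated. -/

import Mathlib

open MeasureTheory Measure Set Filter Topology

/-- Amenability of a discrete group: existence of a left-invariant mean on `ℓ^∞(Γ)`,
realized as bounded (continuous, w.r.t. the discrete topology) real functions. -/
def IsAmenable (Γ : Type*) [Group Γ] : Prop :=
  letI : TopologicalSpace Γ := ⊥
  haveI : DiscreteTopology Γ := ⟨rfl⟩
  ∃ m : BoundedContinuousFunction Γ ℝ →ₗ[ℝ] ℝ,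
    (∀ f : BoundedContinuousFunction Γ ℝ, (∀ γ : Γ, 0 ≤ f γ) → 0 ≤ m f) ∧
    m (BoundedContinuousFunction.const Γ (1 : ℝ)) = 1 ∧
    ∀ (g : Γ) (f : BoundedContinuousFunction Γ ℝ),
      m (f.compContinuous ⟨fun x => g * x, continuous_of_discreteTopology⟩) = m f

/-- A nonsingular action: each group element acts measurably and quasi-preserves `μ`. -/
def IsNonsingularAction (Γ : Type*) [Group Γ] (X : Type*) [MeasurableSpace X]
    [MulAction Γ X] (μ : Measure X) : Prop :=
  ∀ γ : Γ, Measurable (fun x : X => γ • x) ∧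
    μ.map (fun x : X => γ • x) ≪ μ ∧ μ ≪ μ.map (fun x : X => γ • x)

/-- Ergodicity: every invariant measurable set is null or conull. -/
def IsErgodicAction (Γ : Type*) [Group Γ] (X : Type*) [MeasurableSpace X]
    [MulAction Γ X] (μ : Measure X) : Prop :=
  ∀ A : Set X, MeasurableSet A → (∀ γ : Γ, (fun x : X => γ • x) ⁻¹' A = A) →
    μ A = 0 ∨ μ Aᶜ = 0

/-- Freeness: every nontrivial group element moves a.e. point. -/
def IsFreeAction (Γ : Type*) [Group Γ] (X : Type*) [MeasurableSpace X]
    [MulAction Γ X] (μ : Measure X) : Prop :=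
  ∀ γ : Γ, γ ≠ 1 → ∀ᵐ x ∂μ, γ • x ≠ x

/-- A `G`-valued cocycle of the action. -/
def IsCocycle {Γ : Type*} [Group Γ] {X : Type*} [MeasurableSpace X] [MulAction Γ X]
    {G : Type*} [Group G] [MeasurableSpace G] (μ : Measure X) (c : Γ → X → G) : Prop :=
  (∀ γ : Γ, Measurable (c γ)) ∧
    ∀ γ₁ γ₂ : Γ, ∀ᵐ x ∂μ, c (γ₁ * γ₂) x = c γ₁ (γ₂ • x) * c γ₂ x

/-- An ergodic cocycle: the skew product action on `(X × G, μ × ν)` is ergodic,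
where `ν` is a (left Haar) measure on `G`. -/
def IsErgodicCocycle {Γ : Type*} [Group Γ] {X : Type*} [MeasurableSpace X] [MulAction Γ X]
    {G : Type*} [Group G] [MeasurableSpace G] (μ : Measure X) (ν : Measure G)
    (c : Γ → X → G) : Prop :=
  IsCocycle μ c ∧
    ∀ A : Set (X × G), MeasurableSet A →
      (∀ γ : Γ, (fun p : X × G => (γ • p.1, c γ p.1 * p.2)) ⁻¹' A = A) →
      (μ.prod ν) A = 0 ∨ (μ.prod ν) Aᶜ = 0

/-- The conjugacy class of `g`. -/
def conjClass {G : Type*} [Group G] (g : G) : Set G := {h | ∃ k : G, k * g * k⁻¹ = h}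

/-- An [FC]⁻-group: all conjugacy classes are relatively compact. -/
def IsFCbarGroup (G : Type*) [Group G] [TopologicalSpace G] : Prop :=
  ∀ g : G, IsCompact (closure (conjClass g))

/-- A [SIN]-group: there is a fundamental system of conjugation-invariant
neighborhoods of the identity. -/
def IsSINGroup (G : Type*) [Group G] [TopologicalSpace G] : Prop :=
  ∀ U ∈ nhds (1 : G), ∃ V ∈ nhds (1 : G), V ⊆ U ∧ ∀ k : G, (fun h => k * h * k⁻¹) '' V = V

/-- `H• := ⋃_{g ∈ G} g H g⁻¹`, the conjugation saturation of `H`. -/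
def conjSaturation {G : Type*} [Group G] (H : Set G) : Set G :=
  ⋃ g : G, (fun h => g * h * g⁻¹) '' H

/-- If a finitely generated countable group acting nonsingularly and
ergodically on a nonatomic standard probability space admits a bounded ergodic `G`-valued
cocycle, then `G` is compactly generated. -/
theorem compactly_generated_of_bounded_ergodic_cocycle
    {Γ : Type*} [Group Γ] [Countable Γ] (hfg : Group.FG Γ)
    {X : Type*} [MeasurableSpace X] [StandardBorelSpace X] [MulAction Γ X]
    (μ : Measure X) [IsProbabilityMeasure μ] [NullSingletonClass μ]
    (hns : IsNonsingularAction Γ X μ)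
    (herg : IsErgodicAction Γ X μ)
    {G : Type*} [Group G] [TopologicalSpace G] [IsTopologicalGroup G]
    [LocallyCompactSpace G] [SecondCountableTopology G]
    [MeasurableSpace G] [BorelSpace G]
    (ν : Measure G) [ν.IsHaarMeasure]
    (hex : ∃ c : Γ → X → G, IsErgodicCocycle μ ν c ∧
      ∀ γ : Γ, ∃ K : Set G, IsCompact K ∧ ∀ᵐ x ∂μ, c γ x ∈ K) :
    ∃ K : Set G, IsCompact K ∧ Subgroup.closure K = ⊤ := by
  classical
  obtain ⟨c, ⟨⟨hcmeas, hcoc⟩, hergc⟩, hbd⟩ := hex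
  choose Kf hKfc hKfmem using hbd
  obtain ⟨S, hSgen, hSfin⟩ := Group.fg_iff.mp hfg
  obtain ⟨U, hUc, hU1⟩ := exists_compact_mem_nhds (1 : G)
  set Kc : Set G := (⋃ s ∈ S, Kf s) ∪ U with hKc
  have hKccomp : IsCompact Kc :=
    (hSfin.isCompact_biUnion fun s _ => hKfc s).union hUc
  set H : Subgroup G := Subgroup.closure Kc with hH
  have hHopen : IsOpen (H : Set G) :=
    Subgroup.isOpen_of_mem_nhds H
      (Filter.mem_of_superset hU1 (subset_union_right.trans Subgroup.subset_closure))
  have hHmeas : MeasurableSet (H : Set G) := hHopen.measurableSet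
  -- `c 1 = 1` a.e.
  have hone : ∀ᵐ x ∂μ, c 1 x = 1 := by
    filter_upwards [hcoc 1 1] with x hx
    have : c (1 : Γ) x = c 1 x * c 1 x := by simpa using hx
    exact left_eq_mul.mp this
  -- transfer of null sets along the action
  have htrans : ∀ (γ : Γ) {s : Set X}, MeasurableSet s → μ s = 0 →
      μ ((fun x : X => γ • x) ⁻¹' s) = 0 := by
    intro γ s hs h0
    have := (hns γ).2.1 h0
    rwa [Measure.map_apply (hns γ).1 hs] at this
  have htrans' : ∀ (γ : Γ) {s : Set X}, MeasurableSet s →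
      μ ((fun x : X => γ • x) ⁻¹' s) = 0 → μ s = 0 := by
    intro γ s hs h0
    have : μ.map (fun x : X => γ • x) s = 0 := by
      rwa [Measure.map_apply (hns γ).1 hs]
    exact (hns γ).2.2 this
  have hbadmeas : ∀ γ : Γ, MeasurableSet ((c γ) ⁻¹' (↑H : Set G)ᶜ) := fun γ =>
    (hcmeas γ) hHmeas.compl
  -- a.e., every cocycle value lies in H
  have key : ∀ γ : Γ, ∀ᵐ x ∂μ, c γ x ∈ (H : Set G) := by
    have key' : ∀ γ ∈ Subgroup.closure S, ∀ᵐ x ∂μ, c γ x ∈ (H : Set G) := by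
      intro γ hγ
      refine Subgroup.closure_induction (fun s hs => ?_) ?_
        (fun γ₁ γ₂ _ _ ih1 ih2 => ?_) (fun γ _ ih => ?_) hγ
      · filter_upwards [hKfmem s] with x hx
        exact Subgroup.subset_closure (Or.inl (Set.mem_biUnion hs hx))
      · filter_upwards [hone] with x hx
        rw [hx]; exact H.one_mem
      · -- product
        have h1' : ∀ᵐ x ∂μ, c γ₁ (γ₂ • x) ∈ (H : Set G) := by
          have h0 : μ ((c γ₁) ⁻¹' (↑H : Set G)ᶜ) = 0 := by
            rw [ae_iff] at ih1; exact ih1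
          have := htrans γ₂ (hbadmeas γ₁) h0
          rw [ae_iff]
          simpa [Set.preimage] using this
        filter_upwards [hcoc γ₁ γ₂, h1', ih2] with x hx h1 h2
        rw [hx]; exact H.mul_mem h1 h2
      · -- inverse
        have h1' : ∀ᵐ x ∂μ, c γ⁻¹ (γ • x) ∈ (H : Set G) := by
          filter_upwards [hcoc γ⁻¹ γ, hone, ih] with x hx h1 h2
          have : (1 : G) = c γ⁻¹ (γ • x) * c γ x := by
            rw [← h1]; simpa using hx
          have : c γ⁻¹ (γ • x) = (c γ x)⁻¹ := by
            rw [eq_inv_iff_mul_eq_one]; exact this.symm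
          rw [this]; exact H.inv_mem h2
        have h0 : μ ((fun x : X => γ • x) ⁻¹' ((c γ⁻¹) ⁻¹' (↑H : Set G)ᶜ)) = 0 := by
          have := h1'
          rw [ae_iff] at this
          simpa [Set.preimage] using this
        have := htrans' γ (hbadmeas γ⁻¹) h0
        rw [ae_iff]; simpa [Set.preimage] using this
    intro γ
    exact key' γ (by rw [hSgen]; trivial)
  -- the null bad set and its saturation
  set N0 : Set X := ⋃ γ : Γ, (c γ) ⁻¹' (↑H : Set G)ᶜ with hN0
  have hN0meas : MeasurableSet N0 := MeasurableSet.iUnion fun γ => hbadmeas γ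
  have hN0null : μ N0 = 0 := by
    refine measure_iUnion_null fun γ => ?_
    simpa [ae_iff, Set.preimage] using key γ
  set N' : Set X := ⋃ γ : Γ, (fun x : X => γ • x) ⁻¹' N0 with hN'
  have hN'meas : MeasurableSet N' :=
    MeasurableSet.iUnion fun γ => (hns γ).1 hN0meas
  have hN'null : μ N' = 0 :=
    measure_iUnion_null fun γ => htrans γ hN0meas hN0null
  have hN0N' : N0 ⊆ N' := by
    intro x hx
    exact Set.mem_iUnion.2 ⟨1, by simpa using hx⟩
  have hN'inv : ∀ γ : Γ, (fun x : X => γ • x) ⁻¹' N' = N' := by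
    intro γ
    ext x
    simp only [hN', Set.mem_iUnion, Set.mem_preimage]
    constructor
    · rintro ⟨δ, hδ⟩
      exact ⟨δ * γ, by rwa [mul_smul]⟩
    · rintro ⟨δ, hδ⟩
      exact ⟨δ * γ⁻¹, by rwa [mul_smul, inv_smul_smul]⟩
  -- the invariant set
  set A : Set (X × G) := Prod.fst ⁻¹' N' ∪ Prod.snd ⁻¹' (↑H : Set G) with hA
  have hAmeas : MeasurableSet A :=
    (hN'meas.preimage measurable_fst).union (hHmeas.preimage measurable_snd)
  have hAinv : ∀ γ : Γ,
      (fun p : X × G => (γ • p.1, c γ p.1 * p.2)) ⁻¹' A = A := by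
    intro γ
    ext ⟨x, g⟩
    simp only [hA, Set.mem_preimage, Set.mem_union]
    by_cases hx : x ∈ N'
    · have : γ • x ∈ N' := by rw [← hN'inv γ] at hx; exact hx
      simp [hx, this]
    · have hγx : γ • x ∉ N' := by
        intro h; apply hx; rw [← hN'inv γ]; exact h
      have hcx : c γ x ∈ (H : Set G) := by
        by_contra hc
        exact hx (hN0N' (Set.mem_iUnion.2 ⟨γ, hc⟩))
      simp only [hx, hγx, false_or]
      exact ⟨fun h => by simpa using H.mul_mem (H.inv_mem hcx) h,
        fun h => H.mul_mem hcx h⟩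
  -- apply ergodicity of the cocycle
  have hAc : Aᶜ = N'ᶜ ×ˢ (↑H : Set G)ᶜ := by
    ext ⟨x, g⟩
    simp [hA, Set.mem_prod, not_or]
  rcases hergc A hAmeas hAinv with h0 | h0
  · -- A null is impossible since it contains univ ×ˢ H of positive measure
    exfalso
    have hsub : (Set.univ ×ˢ (↑H : Set G)) ⊆ A := by
      rintro ⟨x, g⟩ ⟨-, hg⟩
      exact Or.inr hg
    have : (μ.prod ν) (Set.univ ×ˢ (↑H : Set G)) = 0 :=
      measure_mono_null hsub h0
    rw [Measure.prod_prod, measure_univ, one_mul] at this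
    exact hHopen.measure_ne_zero ν ⟨1, H.one_mem⟩ this
  · -- complement null : H is conull, hence H = ⊤
    have hHcnull : ν (↑H : Set G)ᶜ = 0 := by
      rw [hAc, Measure.prod_prod] at h0
      have : μ N'ᶜ = 1 := by
        rw [measure_compl hN'meas (measure_ne_top μ N'), hN'null, measure_univ]
        simp
      rwa [this, one_mul] at h0
    have hHtop : H = ⊤ := by
      by_contra hne
      obtain ⟨g, hg⟩ : ∃ g : G, g ∉ H := by
        by_contra h
        push_neg at h
        exact hne ((Subgroup.eq_top_iff' H).2 h)
      have hcoset : (fun h : G => g * h) '' (↑H : Set G) ⊆ (↑H : Set G)ᶜ := by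
        rintro - ⟨h, hh, rfl⟩ hmem
        exact hg (by simpa using H.mul_mem hmem (H.inv_mem hh))
      have hopen : IsOpen ((fun h : G => g * h) '' (↑H : Set G)) :=
        (Homeomorph.mulLeft g).isOpenMap _ hHopen
      have hne' : ((fun h : G => g * h) '' (↑H : Set G)).Nonempty :=
        ⟨g * 1, ⟨1, H.one_mem, rfl⟩⟩
      exact hopen.measure_ne_zero ν hne' (measure_mono_null hcoset hHcnull)
    exact ⟨Kc, hKccomp, hHtop⟩
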